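/- For every k ≥ 2, β_k(U−2) = p² + pq·β_{k−2}(U−2) + q·β_{k−1}(U−3), where U−L ≥ 4. -/

import Mathlib

open MeasureTheory ProbabilityTheory Filter
open scoped ENNReal Classical

noncomputable section

variable {Ω : Type*} [MeasurableSpace Ω]

/-- The `k`-th step of the ladder chain `L(2,2,p)` built from the driving
sequence `ξ` (indexed from 1): `X₁ = ±1` according to `ξ₁`, and for `k ≥ 2`,
`X_k = -1` if `ξ_k = -1`, `X_k = 2` if `ξ_k = ξ_{k-1} = 1`, and `X_k = 1`
if `ξ_k = 1, ξ_{k-1} = -1`. -/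
def ladderX (ξ : ℕ → Ω → ℤ) (k : ℕ) (ω : Ω) : ℤ :=
  if k = 1 then (if ξ 1 ω = 1 then 1 else -1)
  else if ξ k ω = -1 then -1
  else if ξ (k - 1) ω = 1 then 2 else 1

/-- The ladder chain `S_n = X₁ + ⋯ + X_n` (with `S_0 = 0`). -/
def ladderS (ξ : ℕ → Ω → ℤ) (n : ℕ) (ω : Ω) : ℤ :=
  ∑ k ∈ Finset.Icc 1 n, ladderX ξ k ω

/-- The truncated exit time `τ_k^x`: the least `l ≤ k` with `S_l^x ≤ L` or
`S_l^x ≥ U`, and `k` if there is no such `l`. -/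
def ladderTau (ξ : ℕ → Ω → ℤ) (L U x : ℤ) (k : ℕ) (ω : Ω) : ℕ :=
  if ∃ l ≤ k, (x + ladderS ξ l ω ≤ L ∨ U ≤ x + ladderS ξ l ω)
  then sInf {l | l ≤ k ∧ (x + ladderS ξ l ω ≤ L ∨ U ≤ x + ladderS ξ l ω)}
  else k

/-- The event `A_k^x`: the walk started at `x` exits through the lower
barrier `L` within the first `k` steps. -/
def ladderA (ξ : ℕ → Ω → ℤ) (L U x : ℤ) (k : ℕ) : Set Ω :=
  ⋃ l ∈ Finset.range (k + 1),
    {ω | ladderTau ξ L U x k ω = l ∧ x + ladderS ξ l ω ≤ L}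

/-- The event `B_k^x`: the walk started at `x` exits through the upper
barrier `U` within the first `k` steps. -/
def ladderB (ξ : ℕ → Ω → ℤ) (L U x : ℤ) (k : ℕ) : Set Ω :=
  ⋃ l ∈ Finset.range (k + 1),
    {ω | ladderTau ξ L U x k ω = l ∧ U ≤ x + ladderS ξ l ω}

-- Phase 1 lemmas
section Aux

lemma ladderX_congr {Ω Ω' : Type*} [MeasurableSpace Ω] [MeasurableSpace Ω']
    (ξ : ℕ → Ω → ℤ) (η : ℕ → Ω' → ℤ) (ω : Ω) (ω' : Ω') (k : ℕ) (hk : 1 ≤ k)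
    (h : ∀ i, 1 ≤ i → i ≤ k → ξ i ω = η i ω') :
    ladderX ξ k ω = ladderX η k ω' := by
  unfold ladderX
  rcases eq_or_ne k 1 with rfl | hk1
  · simp [h 1 le_rfl le_rfl]
  · have h1 : ξ k ω = η k ω' := h k hk le_rfl
    have h2 : ξ (k - 1) ω = η (k - 1) ω' := h (k - 1) (by omega) (by omega)
    simp [hk1, h1, h2]

lemma ladderS_congr {Ω Ω' : Type*} [MeasurableSpace Ω] [MeasurableSpace Ω']
    (ξ : ℕ → Ω → ℤ) (η : ℕ → Ω' → ℤ) (ω : Ω) (ω' : Ω') (m l : ℕ) (hl : l ≤ m)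
    (h : ∀ i, 1 ≤ i → i ≤ m → ξ i ω = η i ω') :
    ladderS ξ l ω = ladderS η l ω' := by
  unfold ladderS
  refine Finset.sum_congr rfl fun i hi => ?_
  rw [Finset.mem_Icc] at hi
  exact ladderX_congr ξ η ω ω' i hi.1 fun j h1 h2 => h j h1 (by omega)

lemma ladderS_zero {Ω : Type*} [MeasurableSpace Ω] (ξ : ℕ → Ω → ℤ) (ω : Ω) :
    ladderS ξ 0 ω = 0 := by simp [ladderS]

lemma mem_ladderB_iff {Ω : Type*} [MeasurableSpace Ω] (ξ : ℕ → Ω → ℤ) (L U x : ℤ)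
    (m : ℕ) (ω : Ω) :
    ω ∈ ladderB ξ L U x m ↔ ∃ l, l ≤ m ∧ U ≤ x + ladderS ξ l ω ∧
      ∀ j < l, (L < x + ladderS ξ j ω ∧ x + ladderS ξ j ω < U) := by
  set T : Set ℕ := {l | l ≤ m ∧ (x + ladderS ξ l ω ≤ L ∨ U ≤ x + ladderS ξ l ω)} with hT
  have hmem : ω ∈ ladderB ξ L U x m ↔
      ladderTau ξ L U x m ω < m + 1 ∧
        U ≤ x + ladderS ξ (ladderTau ξ L U x m ω) ω := by
    simp [ladderB, Set.mem_iUnion, Finset.mem_range]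
  rw [hmem]
  constructor
  · rintro ⟨hl, hU⟩
    set l := ladderTau ξ L U x m ω with hτ
    have hE : ∃ l' ≤ m, (x + ladderS ξ l' ω ≤ L ∨ U ≤ x + ladderS ξ l' ω) :=
      ⟨l, by omega, Or.inr hU⟩
    have hτ' : l = sInf T := by rw [hτ, ladderTau, if_pos hE]
    refine ⟨l, by omega, hU, fun j hj => ?_⟩
    have hjT : j ∉ T := Nat.notMem_of_lt_sInf (by rw [← hτ']; exact hj)
    rw [hT, Set.mem_setOf_eq] at hjT
    push_neg at hjT
    have := hjT (by omega)
    constructor <;> omega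
  · rintro ⟨l, hl, hU, hint⟩
    have hlT : l ∈ T := ⟨hl, Or.inr hU⟩
    have hE : ∃ l' ≤ m, (x + ladderS ξ l' ω ≤ L ∨ U ≤ x + ladderS ξ l' ω) :=
      ⟨l, hl, Or.inr hU⟩
    have hτ' : ladderTau ξ L U x m ω = sInf T := by rw [ladderTau, if_pos hE]
    have h1 : sInf T ≤ l := Nat.sInf_le hlT
    have h2 : sInf T ∈ T := Nat.sInf_mem ⟨l, hlT⟩
    have h3 : ¬ sInf T < l := by
      intro hlt
      have := hint _ hlt
      rcases h2.2 with h | h <;> omega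
    have h4 : ladderTau ξ L U x m ω = l := by rw [hτ']; omega
    rw [h4]
    exact ⟨by omega, hU⟩

lemma mem_ladderB_congr {Ω Ω' : Type*} [MeasurableSpace Ω] [MeasurableSpace Ω']
    (ξ : ℕ → Ω → ℤ) (η : ℕ → Ω' → ℤ) (ω : Ω) (ω' : Ω') (L U x : ℤ) (m : ℕ)
    (h : ∀ i, 1 ≤ i → i ≤ m → ξ i ω = η i ω') :
    ω ∈ ladderB ξ L U x m ↔ ω' ∈ ladderB η L U x m := by
  have hS : ∀ l ≤ m, ladderS ξ l ω = ladderS η l ω' := fun l hl =>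
    ladderS_congr ξ η ω ω' m l hl h
  rw [mem_ladderB_iff, mem_ladderB_iff]
  constructor
  · rintro ⟨l, hl, h1, h2⟩
    refine ⟨l, hl, by rw [← hS l hl]; exact h1, fun j hj => ?_⟩
    rw [← hS j (by omega)]; exact h2 j hj
  · rintro ⟨l, hl, h1, h2⟩
    refine ⟨l, hl, by rw [hS l hl]; exact h1, fun j hj => ?_⟩
    rw [hS j (by omega)]; exact h2 j hj

end Aux
section Aux2

variable {Ω : Type*} [MeasurableSpace Ω]

lemma ladderS_succ (ξ : ℕ → Ω → ℤ) (n : ℕ) (ω : Ω) :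
    ladderS ξ (n + 1) ω = ladderS ξ n ω + ladderX ξ (n + 1) ω := by
  rw [ladderS, ladderS, Finset.sum_Icc_succ_top (by omega)]

lemma ladderS_shift (ξ : ℕ → Ω → ℤ) (hval : ∀ n ω, ξ n ω = 1 ∨ ξ n ω = -1)
    (ω : Ω) (a : ℕ) (ha : 1 ≤ a) (hξ : ξ a ω = -1) (l : ℕ) :
    ladderS ξ (a + l) ω = ladderS ξ a ω + ladderS (fun n ω => ξ (n + a) ω) l ω := by
  induction l with
  | zero => simp [ladderS_zero]
  | succ l ih =>
    rw [show a + (l + 1) = (a + l) + 1 from by omega, ladderS_succ, ih, ladderS_succ]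
    have hX : ladderX ξ (a + l + 1) ω = ladderX (fun n ω => ξ (n + a) ω) (l + 1) ω := by
      rcases Nat.eq_zero_or_pos l with rfl | hl
      · have h1 : a + 0 + 1 ≠ 1 := by omega
        have e1 : a + 0 + 1 - 1 = a := by omega
        have e2 : 1 + a = a + 0 + 1 := by omega
        rw [ladderX, ladderX, if_neg h1, if_pos rfl, e1, e2]
        rcases hval (a + 0 + 1) ω with h | h <;> simp [h, hξ]
      · have h1 : a + l + 1 ≠ 1 := by omega
        have h2 : l + 1 ≠ 1 := by omega
        rw [ladderX, if_neg h1, ladderX, if_neg h2]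
        have e1 : l + 1 + a = a + l + 1 := by omega
        have e2 : l + 1 - 1 + a = a + l + 1 - 1 := by omega
        simp only [e1, e2]
    rw [hX]
    ring

lemma ladderB_peel1 (ξ : ℕ → Ω → ℤ) (hval : ∀ n ω, ξ n ω = 1 ∨ ξ n ω = -1)
    (L U x : ℤ) (m : ℕ) (hm : 1 ≤ m) (ω : Ω) (hξ : ξ 1 ω = -1)
    (hL : L < x - 1) (hU : x < U) :
    ω ∈ ladderB ξ L U x m ↔ ω ∈ ladderB (fun n ω => ξ (n + 1) ω) L U (x - 1) (m - 1) := by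
  have hS1 : ladderS ξ 1 ω = -1 := by
    rw [show (1:ℕ) = 0 + 1 from rfl, ladderS_succ, ladderS_zero, ladderX, if_pos rfl,
      hξ, if_neg (by norm_num)]
    ring
  have key : ∀ j, x + ladderS ξ (j + 1) ω
      = (x - 1) + ladderS (fun n ω => ξ (n + 1) ω) j ω := by
    intro j
    have := ladderS_shift ξ hval ω 1 le_rfl hξ j
    rw [show 1 + j = j + 1 from by omega] at this
    rw [this, hS1]; ring
  rw [mem_ladderB_iff, mem_ladderB_iff]
  constructor
  · rintro ⟨l, hl, hUl, hint⟩
    have hl0 : l ≠ 0 := by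
      rintro rfl
      rw [ladderS_zero] at hUl
      omega
    refine ⟨l - 1, by omega, ?_, fun j hj => ?_⟩
    · rw [← key (l - 1), show l - 1 + 1 = l from by omega]; exact hUl
    · have := hint (j + 1) (by omega)
      rw [key j] at this
      exact this
  · rintro ⟨l, hl, hUl, hint⟩
    refine ⟨l + 1, by omega, by rw [key l]; exact hUl, fun j hj => ?_⟩
    rcases Nat.eq_zero_or_pos j with rfl | hj0
    · rw [ladderS_zero]
      constructor <;> omega
    · obtain ⟨j', rfl⟩ : ∃ j', j = j' + 1 := ⟨j - 1, by omega⟩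
      rw [key j']
      exact hint j' (by omega)

lemma ladderB_peel2 (ξ : ℕ → Ω → ℤ) (hval : ∀ n ω, ξ n ω = 1 ∨ ξ n ω = -1)
    (L U x : ℤ) (m : ℕ) (hm : 2 ≤ m) (ω : Ω) (hξ1 : ξ 1 ω = 1) (hξ2 : ξ 2 ω = -1)
    (hL : L < x) (hU : x + 1 < U) :
    ω ∈ ladderB ξ L U x m ↔ ω ∈ ladderB (fun n ω => ξ (n + 2) ω) L U x (m - 2) := by
  have hS1 : ladderS ξ 1 ω = 1 := by
    rw [show (1:ℕ) = 0 + 1 from rfl, ladderS_succ, ladderS_zero, ladderX, if_pos rfl,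
      hξ1, if_pos rfl]
    ring
  have hS2 : ladderS ξ 2 ω = 0 := by
    rw [show (2:ℕ) = 1 + 1 from rfl, ladderS_succ, hS1, ladderX, if_neg (by norm_num),
      hξ2, if_pos rfl]
    ring
  have key : ∀ j, x + ladderS ξ (j + 2) ω
      = x + ladderS (fun n ω => ξ (n + 2) ω) j ω := by
    intro j
    have := ladderS_shift ξ hval ω 2 (by omega) hξ2 j
    rw [show 2 + j = j + 2 from by omega] at this
    rw [this, hS2]; ring
  rw [mem_ladderB_iff, mem_ladderB_iff]
  constructor
  · rintro ⟨l, hl, hUl, hint⟩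
    have hl0 : l ≠ 0 := by rintro rfl; rw [ladderS_zero] at hUl; omega
    have hl1 : l ≠ 1 := by rintro rfl; rw [hS1] at hUl; omega
    refine ⟨l - 2, by omega, ?_, fun j hj => ?_⟩
    · rw [← key (l - 2), show l - 2 + 2 = l from by omega]; exact hUl
    · have := hint (j + 2) (by omega)
      rw [key j] at this
      exact this
  · rintro ⟨l, hl, hUl, hint⟩
    refine ⟨l + 2, by omega, by rw [key l]; exact hUl, fun j hj => ?_⟩
    rcases Nat.eq_zero_or_pos j with rfl | hj0
    · rw [ladderS_zero]; constructor <;> omega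
    rcases eq_or_ne j 1 with rfl | hj1
    · rw [hS1]; constructor <;> omega
    obtain ⟨j', rfl⟩ : ∃ j', j = j' + 2 := ⟨j - 2, by omega⟩
    rw [key j']
    exact hint j' (by omega)

lemma ladderB_up2 (ξ : ℕ → Ω → ℤ) (L U x : ℤ) (m : ℕ) (hm : 2 ≤ m) (ω : Ω)
    (hξ1 : ξ 1 ω = 1) (hξ2 : ξ 2 ω = 1)
    (hL : L < x) (hU : x + 1 < U) (hU2 : U ≤ x + 3) :
    ω ∈ ladderB ξ L U x m := by
  have hS1 : ladderS ξ 1 ω = 1 := by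
    rw [show (1:ℕ) = 0 + 1 from rfl, ladderS_succ, ladderS_zero, ladderX, if_pos rfl,
      hξ1, if_pos rfl]
    ring
  have hS2 : ladderS ξ 2 ω = 3 := by
    rw [show (2:ℕ) = 1 + 1 from rfl, ladderS_succ, hS1, ladderX, if_neg (by norm_num),
      hξ2, if_neg (by norm_num), if_pos hξ1]
    ring
  rw [mem_ladderB_iff]
  refine ⟨2, hm, by rw [hS2]; omega, fun j hj => ?_⟩
  rcases Nat.eq_zero_or_pos j with rfl | hj0
  · rw [ladderS_zero]; constructor <;> omega
  · have : j = 1 := by omega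
    subst this
    rw [hS1]; constructor <;> omega

end Aux2
section Aux3

variable {Ω : Type*} [MeasurableSpace Ω]

def svB (b : Bool) : ℤ := if b then 1 else -1

lemma svB_val (b : Bool) : svB b = 1 ∨ svB b = -1 := by cases b <;> simp [svB]

def extBool {m : ℕ} (v : Fin m → Bool) (n : ℕ) : Bool :=
  if h : n - 1 < m then v ⟨n - 1, h⟩ else true

def goodSet (L U x : ℤ) (m : ℕ) : Finset (Fin m → Bool) :=
  Finset.univ.filter (fun v => () ∈ ladderB (fun n (_ : Unit) => svB (extBool v n)) L U x m)

def cylSet (ξ : ℕ → Ω → ℤ) (a : ℕ) {m : ℕ} (v : Fin m → Bool) : Set Ω :=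
  ⋂ n ∈ Finset.Icc (a + 1) (a + m), {ω | ξ n ω = svB (extBool v (n - a))}

lemma mem_cylSet_iff (ξ : ℕ → Ω → ℤ) (a : ℕ) {m : ℕ} (v : Fin m → Bool) (ω : Ω) :
    ω ∈ cylSet ξ a v ↔ ∀ i, 1 ≤ i → i ≤ m → ξ (i + a) ω = svB (extBool v i) := by
  simp only [cylSet, Set.mem_iInter, Set.mem_setOf_eq, Finset.mem_Icc]
  constructor
  · intro h i h1 h2
    have := h (i + a) ⟨by omega, by omega⟩
    rwa [show i + a - a = i from by omega] at this
  · intro h n hn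
    have := h (n - a) (by omega) (by omega)
    rwa [show n - a + a = n from by omega] at this

lemma ladderB_shift_decomp (ξ : ℕ → Ω → ℤ) (hval : ∀ n ω, ξ n ω = 1 ∨ ξ n ω = -1)
    (L U x : ℤ) (m a : ℕ) :
    ladderB (fun n ω => ξ (n + a) ω) L U x m = ⋃ v ∈ goodSet L U x m, cylSet ξ a v := by
  ext ω
  simp only [Set.mem_iUnion, goodSet, Finset.mem_filter, Finset.mem_univ, true_and,
    exists_prop]
  constructor
  · intro hB
    set v : Fin m → Bool := fun i => if ξ (i.1 + 1 + a) ω = 1 then true else false with hv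
    have hmatch : ∀ i, 1 ≤ i → i ≤ m → ξ (i + a) ω = svB (extBool v i) := by
      intro i h1 h2
      have hi : i - 1 < m := by omega
      rw [extBool, dif_pos hi, hv]
      simp only
      rw [show i - 1 + 1 + a = i + a from by omega]
      rcases hval (i + a) ω with h | h <;> rw [h] <;> simp [svB]
    refine ⟨v, ?_, (mem_cylSet_iff ξ a v ω).2 hmatch⟩
    exact (mem_ladderB_congr _ _ ω () L U x m (fun i h1 h2 => hmatch i h1 h2)).1 hB
  · rintro ⟨v, hgood, hcyl⟩
    have hmatch := (mem_cylSet_iff ξ a v ω).1 hcyl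
    exact (mem_ladderB_congr _ _ ω () L U x m (fun i h1 h2 => hmatch i h1 h2)).2 hgood

lemma cylSet_measurable (ξ : ℕ → Ω → ℤ) (hmeas : ∀ n, Measurable (ξ n)) (a : ℕ)
    {m : ℕ} (v : Fin m → Bool) : MeasurableSet (cylSet ξ a v) :=
  Finset.measurableSet_biInter _ fun n _ => (hmeas n) (measurableSet_singleton _)

lemma cylSet_disjoint (ξ : ℕ → Ω → ℤ) (a : ℕ) {m : ℕ} (v w : Fin m → Bool)
    (hvw : v ≠ w) : Disjoint (cylSet ξ a v) (cylSet ξ a w) := by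
  obtain ⟨i, hi⟩ := Function.ne_iff.1 hvw
  rw [Set.disjoint_left]
  intro ω hv hw
  have h1 := (mem_cylSet_iff ξ a v ω).1 hv (i.1 + 1) (by omega) (by omega)
  have h2 := (mem_cylSet_iff ξ a w ω).1 hw (i.1 + 1) (by omega) (by omega)
  have hei : ∀ u : Fin m → Bool, extBool u (i.1 + 1) = u i := by
    intro u
    rw [extBool, dif_pos (by omega : i.1 + 1 - 1 < m)]
    exact congrArg u (Fin.ext (by simp))
  rw [hei v] at h1
  rw [hei w] at h2
  have h3 : svB (v i) = svB (w i) := by rw [← h1, ← h2]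
  apply hi
  cases hvi : v i <;> cases hwi : w i
  · rfl
  · rw [hvi, hwi] at h3; simp [svB] at h3
  · rw [hvi, hwi] at h3; simp [svB] at h3
  · rfl

end Aux3
section Aux4

variable {Ω : Type*} [MeasurableSpace Ω]

def wgt (p q : ℝ) (b : Bool) : ℝ≥0∞ := ENNReal.ofReal (if b then p else q)

lemma meas_cyl_prod (P : Measure Ω) (ξ : ℕ → Ω → ℤ)
    (hindep : iIndepFun ξ P)
    (s : Finset ℕ) (c : ℕ → ℤ) :
    P (⋂ n ∈ s, {ω | ξ n ω = c n}) = ∏ n ∈ s, P {ω | ξ n ω = c n} :=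
  hindep.meas_biInter fun i _ => ⟨{c i}, measurableSet_singleton _, rfl⟩

lemma meas_xi_one (P : Measure Ω) [IsProbabilityMeasure P] (p : ℝ) (ξ : ℕ → Ω → ℤ)
    (hprob : ∀ n, 1 ≤ n → P {ω | ξ n ω = 1} = ENNReal.ofReal p)
    (n : ℕ) (hn : 1 ≤ n) : P {ω | ξ n ω = (1:ℤ)} = ENNReal.ofReal p := hprob n hn

lemma meas_xi_neg (P : Measure Ω) [IsProbabilityMeasure P] (p q : ℝ)
    (hp0 : 0 < p) (hq : q = 1 - p) (ξ : ℕ → Ω → ℤ)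
    (hmeas : ∀ n, Measurable (ξ n)) (hval : ∀ n ω, ξ n ω = 1 ∨ ξ n ω = -1)
    (hprob : ∀ n, 1 ≤ n → P {ω | ξ n ω = 1} = ENNReal.ofReal p)
    (n : ℕ) (hn : 1 ≤ n) : P {ω | ξ n ω = (-1:ℤ)} = ENNReal.ofReal q := by
  have hs : {ω | ξ n ω = (-1:ℤ)} = {ω | ξ n ω = 1}ᶜ := by
    ext ω
    simp only [Set.mem_setOf_eq, Set.mem_compl_iff]
    constructor
    · intro h h1; rw [h1] at h; norm_num at h
    · intro h; exact (hval n ω).resolve_left h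
  have hm : MeasurableSet {ω | ξ n ω = (1:ℤ)} := (hmeas n) (measurableSet_singleton 1)
  rw [hs, prob_compl_eq_one_sub hm, hprob n hn, hq, ← ENNReal.ofReal_one,
    ← ENNReal.ofReal_sub _ hp0.le]

lemma meas_xi_svB (P : Measure Ω) [IsProbabilityMeasure P] (p q : ℝ)
    (hp0 : 0 < p) (hq : q = 1 - p) (ξ : ℕ → Ω → ℤ)
    (hmeas : ∀ n, Measurable (ξ n)) (hval : ∀ n ω, ξ n ω = 1 ∨ ξ n ω = -1)
    (hprob : ∀ n, 1 ≤ n → P {ω | ξ n ω = 1} = ENNReal.ofReal p)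
    (n : ℕ) (hn : 1 ≤ n) (b : Bool) :
    P {ω | ξ n ω = svB b} = wgt p q b := by
  cases b
  · rw [show svB false = (-1:ℤ) from rfl, meas_xi_neg P p q hp0 hq ξ hmeas hval hprob n hn]
    rfl
  · rw [show svB true = (1:ℤ) from rfl, hprob n hn]
    rfl

lemma prod_shift_Icc (a m : ℕ) (f : ℕ → ℝ≥0∞) :
    ∏ n ∈ Finset.Icc (a + 1) (a + m), f (n - a) = ∏ n ∈ Finset.Icc 1 m, f n := by
  rw [show Finset.Icc (a + 1) (a + m) = (Finset.Icc 1 m).map (addRightEmbedding a) from by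
    rw [Finset.map_add_right_Icc]; congr 1 <;> omega]
  rw [Finset.prod_map]
  refine Finset.prod_congr rfl fun n hn => ?_
  simp [addRightEmbedding]

lemma meas_cylSet (P : Measure Ω) [IsProbabilityMeasure P] (p q : ℝ)
    (hp0 : 0 < p) (hq : q = 1 - p) (ξ : ℕ → Ω → ℤ)
    (hmeas : ∀ n, Measurable (ξ n)) (hval : ∀ n ω, ξ n ω = 1 ∨ ξ n ω = -1)
    (hprob : ∀ n, 1 ≤ n → P {ω | ξ n ω = 1} = ENNReal.ofReal p)
    (hindep : iIndepFun ξ P)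
    (a : ℕ) {m : ℕ} (v : Fin m → Bool) :
    P (cylSet ξ a v) = ∏ n ∈ Finset.Icc 1 m, wgt p q (extBool v n) := by
  rw [cylSet, meas_cyl_prod P ξ hindep]
  rw [← prod_shift_Icc a m (fun n => wgt p q (extBool v n))]
  refine Finset.prod_congr rfl fun n hn => ?_
  rw [Finset.mem_Icc] at hn
  exact meas_xi_svB P p q hp0 hq ξ hmeas hval hprob n (by omega) _

end Aux4
section Aux5

variable {Ω : Type*} [MeasurableSpace Ω]

lemma inter_cyl_one (ξ : ℕ → Ω → ℤ) {m : ℕ} (v : Fin m → Bool) (z : ℤ) :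
    {ω | ξ 1 ω = z} ∩ cylSet ξ 1 v
      = ⋂ n ∈ Finset.Icc 1 (1 + m),
          {ω | ξ n ω = (if n = 1 then z else svB (extBool v (n - 1)))} := by
  ext ω
  simp only [Set.mem_inter_iff, Set.mem_setOf_eq, cylSet, Set.mem_iInter, Finset.mem_Icc]
  constructor
  · rintro ⟨h1, h2⟩ n hn
    rcases eq_or_ne n 1 with rfl | hne
    · rw [if_pos rfl]; exact h1
    · rw [if_neg hne]; exact h2 n ⟨by omega, by omega⟩
  · intro h
    refine ⟨?_, fun n hn => ?_⟩
    · have := h 1 ⟨le_rfl, by omega⟩; rwa [if_pos rfl] at this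
    · have := h n ⟨by omega, by omega⟩; rwa [if_neg (by omega)] at this

lemma inter_cyl_two (ξ : ℕ → Ω → ℤ) {m : ℕ} (v : Fin m → Bool) (z1 z2 : ℤ) :
    ({ω | ξ 1 ω = z1} ∩ {ω | ξ 2 ω = z2}) ∩ cylSet ξ 2 v
      = ⋂ n ∈ Finset.Icc 1 (2 + m),
          {ω | ξ n ω = (if n = 1 then z1 else if n = 2 then z2
            else svB (extBool v (n - 2)))} := by
  ext ω
  simp only [Set.mem_inter_iff, Set.mem_setOf_eq, cylSet, Set.mem_iInter, Finset.mem_Icc]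
  constructor
  · rintro ⟨⟨h1, h2⟩, h3⟩ n hn
    rcases eq_or_ne n 1 with rfl | hne1
    · rw [if_pos rfl]; exact h1
    rcases eq_or_ne n 2 with rfl | hne2
    · rw [if_neg hne1, if_pos rfl]; exact h2
    · rw [if_neg hne1, if_neg hne2]; exact h3 n ⟨by omega, by omega⟩
  · intro h
    refine ⟨⟨?_, ?_⟩, fun n hn => ?_⟩
    · have := h 1 ⟨le_rfl, by omega⟩; rwa [if_pos rfl] at this
    · have := h 2 ⟨by omega, by omega⟩; rwa [if_neg (by omega), if_pos rfl] at this
    · have := h n ⟨by omega, by omega⟩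
      rwa [if_neg (by omega), if_neg (by omega)] at this

lemma meas_prefix1 (P : Measure Ω) [IsProbabilityMeasure P] (p q : ℝ)
    (hp0 : 0 < p) (hq : q = 1 - p) (ξ : ℕ → Ω → ℤ)
    (hmeas : ∀ n, Measurable (ξ n)) (hval : ∀ n ω, ξ n ω = 1 ∨ ξ n ω = -1)
    (hprob : ∀ n, 1 ≤ n → P {ω | ξ n ω = 1} = ENNReal.ofReal p)
    (hindep : iIndepFun ξ P)
    {m : ℕ} (v : Fin m → Bool) :
    P ({ω | ξ 1 ω = (-1:ℤ)} ∩ cylSet ξ 1 v)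
      = ENNReal.ofReal q * ∏ n ∈ Finset.Icc 1 m, wgt p q (extBool v n) := by
  rw [inter_cyl_one, meas_cyl_prod P ξ hindep]
  rw [show Finset.Icc 1 (1 + m) = insert 1 (Finset.Icc (1 + 1) (1 + m)) from by
    ext n; simp only [Finset.mem_Icc, Finset.mem_insert]; omega]
  rw [Finset.prod_insert (by simp [Finset.mem_Icc])]
  congr 1
  · rw [show (if (1:ℕ) = 1 then (-1:ℤ) else svB (extBool v (1 - 1))) = -1 from if_pos rfl]
    exact meas_xi_neg P p q hp0 hq ξ hmeas hval hprob 1 le_rfl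
  · rw [← prod_shift_Icc 1 m (fun n => wgt p q (extBool v n))]
    refine Finset.prod_congr rfl fun n hn => ?_
    rw [Finset.mem_Icc] at hn
    rw [if_neg (by omega)]
    exact meas_xi_svB P p q hp0 hq ξ hmeas hval hprob n (by omega) _

lemma meas_prefix2 (P : Measure Ω) [IsProbabilityMeasure P] (p q : ℝ)
    (hp0 : 0 < p) (hq : q = 1 - p) (ξ : ℕ → Ω → ℤ)
    (hmeas : ∀ n, Measurable (ξ n)) (hval : ∀ n ω, ξ n ω = 1 ∨ ξ n ω = -1)
    (hprob : ∀ n, 1 ≤ n → P {ω | ξ n ω = 1} = ENNReal.ofReal p)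
    (hindep : iIndepFun ξ P)
    {m : ℕ} (v : Fin m → Bool) :
    P (({ω | ξ 1 ω = (1:ℤ)} ∩ {ω | ξ 2 ω = (-1:ℤ)}) ∩ cylSet ξ 2 v)
      = ENNReal.ofReal p *
          (ENNReal.ofReal q * ∏ n ∈ Finset.Icc 1 m, wgt p q (extBool v n)) := by
  rw [inter_cyl_two, meas_cyl_prod P ξ hindep]
  rw [show Finset.Icc 1 (2 + m) = insert 1 (insert 2 (Finset.Icc (2 + 1) (2 + m))) from by
    ext n; simp only [Finset.mem_Icc, Finset.mem_insert]; omega]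
  rw [Finset.prod_insert (by simp [Finset.mem_Icc]),
    Finset.prod_insert (by simp [Finset.mem_Icc])]
  congr 1
  · rw [show (if (1:ℕ) = 1 then (1:ℤ) else if (1:ℕ) = 2 then (-1:ℤ)
      else svB (extBool v (1 - 2))) = 1 from if_pos rfl]
    exact hprob 1 le_rfl
  congr 1
  · rw [show (if (2:ℕ) = 1 then (1:ℤ) else if (2:ℕ) = 2 then (-1:ℤ)
      else svB (extBool v (2 - 2))) = -1 from by norm_num]
    exact meas_xi_neg P p q hp0 hq ξ hmeas hval hprob 2 (by omega)
  · rw [← prod_shift_Icc 2 m (fun n => wgt p q (extBool v n))]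
    refine Finset.prod_congr rfl fun n hn => ?_
    rw [Finset.mem_Icc] at hn
    rw [if_neg (by omega), if_neg (by omega)]
    exact meas_xi_svB P p q hp0 hq ξ hmeas hval hprob n (by omega) _

lemma meas_11 (P : Measure Ω) [IsProbabilityMeasure P] (p : ℝ) (ξ : ℕ → Ω → ℤ)
    (hprob : ∀ n, 1 ≤ n → P {ω | ξ n ω = 1} = ENNReal.ofReal p)
    (hindep : iIndepFun ξ P) :
    P ({ω | ξ 1 ω = (1:ℤ)} ∩ {ω | ξ 2 ω = (1:ℤ)})
      = ENNReal.ofReal p * ENNReal.ofReal p := by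
  have hset : {ω | ξ 1 ω = (1:ℤ)} ∩ {ω | ξ 2 ω = (1:ℤ)}
      = ⋂ n ∈ ({1, 2} : Finset ℕ), {ω | ξ n ω = (1:ℤ)} := by
    ext ω
    simp only [Set.mem_inter_iff, Set.mem_setOf_eq, Set.mem_iInter, Finset.mem_insert,
      Finset.mem_singleton]
    constructor
    · rintro ⟨h1, h2⟩ n hn
      rcases hn with rfl | rfl
      · exact h1
      · exact h2
    · intro h; exact ⟨h 1 (Or.inl rfl), h 2 (Or.inr rfl)⟩
  rw [hset, meas_cyl_prod P ξ hindep (c := fun _ => (1:ℤ))]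
  rw [Finset.prod_insert (by simp), Finset.prod_singleton, hprob 1 le_rfl, hprob 2 (by omega)]

end Aux5
section Aux6

variable {Ω : Type*} [MeasurableSpace Ω]

lemma meas_B_shift (P : Measure Ω) [IsProbabilityMeasure P] (p q : ℝ)
    (hp0 : 0 < p) (hq : q = 1 - p) (ξ : ℕ → Ω → ℤ)
    (hmeas : ∀ n, Measurable (ξ n)) (hval : ∀ n ω, ξ n ω = 1 ∨ ξ n ω = -1)
    (hprob : ∀ n, 1 ≤ n → P {ω | ξ n ω = 1} = ENNReal.ofReal p)
    (hindep : iIndepFun ξ P)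
    (L U x : ℤ) (m a : ℕ) :
    P (ladderB (fun n ω => ξ (n + a) ω) L U x m)
      = ∑ v ∈ goodSet L U x m, ∏ n ∈ Finset.Icc 1 m, wgt p q (extBool v n) := by
  rw [ladderB_shift_decomp ξ hval L U x m a]
  rw [measure_biUnion_finset (fun v _ w _ hvw => cylSet_disjoint ξ a v w hvw)
    (fun v _ => cylSet_measurable ξ hmeas a v)]
  exact Finset.sum_congr rfl fun v _ => meas_cylSet P p q hp0 hq ξ hmeas hval hprob hindep a v

lemma meas_B_zero (P : Measure Ω) [IsProbabilityMeasure P] (p q : ℝ)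
    (hp0 : 0 < p) (hq : q = 1 - p) (ξ : ℕ → Ω → ℤ)
    (hmeas : ∀ n, Measurable (ξ n)) (hval : ∀ n ω, ξ n ω = 1 ∨ ξ n ω = -1)
    (hprob : ∀ n, 1 ≤ n → P {ω | ξ n ω = 1} = ENNReal.ofReal p)
    (hindep : iIndepFun ξ P)
    (L U x : ℤ) (m : ℕ) :
    P (ladderB ξ L U x m)
      = ∑ v ∈ goodSet L U x m, ∏ n ∈ Finset.Icc 1 m, wgt p q (extBool v n) :=
  meas_B_shift P p q hp0 hq ξ hmeas hval hprob hindep L U x m 0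

lemma meas_interA1_B (P : Measure Ω) [IsProbabilityMeasure P] (p q : ℝ)
    (hp0 : 0 < p) (hq : q = 1 - p) (ξ : ℕ → Ω → ℤ)
    (hmeas : ∀ n, Measurable (ξ n)) (hval : ∀ n ω, ξ n ω = 1 ∨ ξ n ω = -1)
    (hprob : ∀ n, 1 ≤ n → P {ω | ξ n ω = 1} = ENNReal.ofReal p)
    (hindep : iIndepFun ξ P)
    (L U x : ℤ) (m : ℕ) :
    P ({ω | ξ 1 ω = (-1:ℤ)} ∩ ladderB (fun n ω => ξ (n + 1) ω) L U x m)
      = ENNReal.ofReal q * P (ladderB ξ L U x m) := by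
  rw [ladderB_shift_decomp ξ hval L U x m 1, Set.inter_iUnion₂]
  have hms : ∀ v ∈ goodSet L U x m,
      MeasurableSet ({ω | ξ 1 ω = (-1:ℤ)} ∩ cylSet ξ 1 v) := fun v _ =>
    ((hmeas 1) (measurableSet_singleton _)).inter (cylSet_measurable ξ hmeas 1 v)
  rw [measure_biUnion_finset
    (fun v _ w _ hvw => ((cylSet_disjoint ξ 1 v w hvw).mono
      Set.inter_subset_right Set.inter_subset_right)) hms]
  rw [meas_B_zero P p q hp0 hq ξ hmeas hval hprob hindep L U x m, Finset.mul_sum]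
  exact Finset.sum_congr rfl fun v _ =>
    meas_prefix1 P p q hp0 hq ξ hmeas hval hprob hindep v

lemma meas_interA3_B (P : Measure Ω) [IsProbabilityMeasure P] (p q : ℝ)
    (hp0 : 0 < p) (hq : q = 1 - p) (ξ : ℕ → Ω → ℤ)
    (hmeas : ∀ n, Measurable (ξ n)) (hval : ∀ n ω, ξ n ω = 1 ∨ ξ n ω = -1)
    (hprob : ∀ n, 1 ≤ n → P {ω | ξ n ω = 1} = ENNReal.ofReal p)
    (hindep : iIndepFun ξ P)
    (L U x : ℤ) (m : ℕ) :
    P (({ω | ξ 1 ω = (1:ℤ)} ∩ {ω | ξ 2 ω = (-1:ℤ)})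
        ∩ ladderB (fun n ω => ξ (n + 2) ω) L U x m)
      = ENNReal.ofReal p * (ENNReal.ofReal q * P (ladderB ξ L U x m)) := by
  rw [ladderB_shift_decomp ξ hval L U x m 2, Set.inter_iUnion₂]
  have hms : ∀ v ∈ goodSet L U x m,
      MeasurableSet (({ω | ξ 1 ω = (1:ℤ)} ∩ {ω | ξ 2 ω = (-1:ℤ)}) ∩ cylSet ξ 2 v) :=
    fun v _ => (((hmeas 1) (measurableSet_singleton _)).inter
      ((hmeas 2) (measurableSet_singleton _))).inter (cylSet_measurable ξ hmeas 2 v)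
  rw [measure_biUnion_finset
    (fun v _ w _ hvw => ((cylSet_disjoint ξ 2 v w hvw).mono
      Set.inter_subset_right Set.inter_subset_right)) hms]
  rw [meas_B_zero P p q hp0 hq ξ hmeas hval hprob hindep L U x m, Finset.mul_sum]
  have : ∀ v ∈ goodSet L U x m, ENNReal.ofReal p *
      (ENNReal.ofReal q * ∏ n ∈ Finset.Icc 1 m, wgt p q (extBool v n))
      = ENNReal.ofReal p * ENNReal.ofReal q * ∏ n ∈ Finset.Icc 1 m, wgt p q (extBool v n) := by
    intro v _; ring
  rw [Finset.mul_sum]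
  refine Finset.sum_congr rfl fun v hv => ?_
  rw [meas_prefix2 P p q hp0 hq ξ hmeas hval hprob hindep v]

end Aux6
/-- For `k ≥ 2`,
`β_k(U-2) = p² + pq·β_(k-2)(U-2) + q·β_(k-1)(U-3)`. -/
theorem ladder_betak_rec_second (p q : ℝ) (hp0 : 0 < p) (hp1 : p < 1) (hq : q = 1 - p)
    (P : Measure Ω) [IsProbabilityMeasure P]
    (ξ : ℕ → Ω → ℤ) (hmeas : ∀ n, Measurable (ξ n))
    (hindep : iIndepFun ξ P)
    (hval : ∀ n ω, ξ n ω = 1 ∨ ξ n ω = -1)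
    (hprob : ∀ n, 1 ≤ n → P {ω | ξ n ω = 1} = ENNReal.ofReal p)
    (L U : ℤ) (hLU : U - L ≥ 4) (k : ℕ) (hk : 2 ≤ k) :
    (P (ladderB ξ L U (U - 2) k)).toReal
      = p ^ 2 + p * q * (P (ladderB ξ L U (U - 2) (k - 2))).toReal
        + q * (P (ladderB ξ L U (U - 3) (k - 1))).toReal := by
  obtain ⟨m, rfl⟩ : ∃ m, k = m + 2 := ⟨k - 2, by omega⟩
  rw [show m + 2 - 2 = m from by omega, show m + 2 - 1 = m + 1 from by omega]
  set B := ladderB ξ L U (U - 2) (m + 2) with hB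
  set Bs1 := ladderB (fun n ω => ξ (n + 1) ω) L U (U - 3) (m + 1) with hBs1
  set Bs2 := ladderB (fun n ω => ξ (n + 2) ω) L U (U - 2) m with hBs2
  have hpeel1 : ∀ ω, ξ 1 ω = -1 → (ω ∈ B ↔ ω ∈ Bs1) := by
    intro ω h1
    have := ladderB_peel1 ξ hval L U (U - 2) (m + 2) (by omega) ω h1 (by omega) (by omega)
    rwa [show m + 2 - 1 = m + 1 from by omega,
      show (U:ℤ) - 2 - 1 = U - 3 from by ring] at this
  have hpeel2 : ∀ ω, ξ 1 ω = 1 → ξ 2 ω = -1 → (ω ∈ B ↔ ω ∈ Bs2) := by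
    intro ω h1 h2
    have := ladderB_peel2 ξ hval L U (U - 2) (m + 2) (by omega) ω h1 h2
      (by omega) (by omega)
    rwa [show m + 2 - 2 = m from by omega] at this
  have hup : ∀ ω, ξ 1 ω = 1 → ξ 2 ω = 1 → ω ∈ B := fun ω h1 h2 =>
    ladderB_up2 ξ L U (U - 2) (m + 2) (by omega) ω h1 h2 (by omega) (by omega) (by omega)
  have hBsets : B = ({ω | ξ 1 ω = (1:ℤ)} ∩ {ω | ξ 2 ω = (1:ℤ)})
      ∪ ((({ω | ξ 1 ω = (1:ℤ)} ∩ {ω | ξ 2 ω = (-1:ℤ)}) ∩ Bs2)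
        ∪ ({ω | ξ 1 ω = (-1:ℤ)} ∩ Bs1)) := by
    ext ω
    simp only [Set.mem_union, Set.mem_inter_iff, Set.mem_setOf_eq]
    constructor
    · intro hBω
      rcases hval 1 ω with h1 | h1
      · rcases hval 2 ω with h2 | h2
        · exact Or.inl ⟨h1, h2⟩
        · exact Or.inr (Or.inl ⟨⟨h1, h2⟩, (hpeel2 ω h1 h2).1 hBω⟩)
      · exact Or.inr (Or.inr ⟨h1, (hpeel1 ω h1).1 hBω⟩)
    · rintro (⟨h1, h2⟩ | (⟨⟨h1, h2⟩, hBω⟩ | ⟨h1, hBω⟩))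
      · exact hup ω h1 h2
      · exact (hpeel2 ω h1 h2).2 hBω
      · exact (hpeel1 ω h1).2 hBω
  have hBs1meas : MeasurableSet Bs1 := by
    rw [hBs1, ladderB_shift_decomp ξ hval L U (U - 3) (m + 1) 1]
    exact (goodSet L U (U - 3) (m + 1)).measurableSet_biUnion
      fun v _ => cylSet_measurable ξ hmeas 1 v
  have hBs2meas : MeasurableSet Bs2 := by
    rw [hBs2, ladderB_shift_decomp ξ hval L U (U - 2) m 2]
    exact (goodSet L U (U - 2) m).measurableSet_biUnion
      fun v _ => cylSet_measurable ξ hmeas 2 v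
  have hd1 : Disjoint (({ω | ξ 1 ω = (1:ℤ)} ∩ {ω | ξ 2 ω = (-1:ℤ)}) ∩ Bs2)
      ({ω | ξ 1 ω = (-1:ℤ)} ∩ Bs1) := by
    rw [Set.disjoint_left]
    rintro ω ⟨⟨h1, _⟩, _⟩ ⟨h1', _⟩
    simp only [Set.mem_setOf_eq] at h1 h1'
    omega
  have hd2 : Disjoint ({ω | ξ 1 ω = (1:ℤ)} ∩ {ω | ξ 2 ω = (1:ℤ)})
      ((({ω | ξ 1 ω = (1:ℤ)} ∩ {ω | ξ 2 ω = (-1:ℤ)}) ∩ Bs2)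
        ∪ ({ω | ξ 1 ω = (-1:ℤ)} ∩ Bs1)) := by
    rw [Set.disjoint_left]
    rintro ω ⟨h1, h2⟩ (⟨⟨_, h2'⟩, _⟩ | ⟨h1', _⟩)
    · simp only [Set.mem_setOf_eq] at h2 h2'
      omega
    · simp only [Set.mem_setOf_eq] at h1 h1'
      omega
  have hmeasU : MeasurableSet ((({ω | ξ 1 ω = (1:ℤ)} ∩ {ω | ξ 2 ω = (-1:ℤ)}) ∩ Bs2)
      ∪ ({ω | ξ 1 ω = (-1:ℤ)} ∩ Bs1)) := by
    refine MeasurableSet.union ?_ ?_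
    · exact (((hmeas 1) (measurableSet_singleton _)).inter
        ((hmeas 2) (measurableSet_singleton _))).inter hBs2meas
    · exact ((hmeas 1) (measurableSet_singleton _)).inter hBs1meas
  have hmeasB1 : MeasurableSet ({ω | ξ 1 ω = (-1:ℤ)} ∩ Bs1) :=
    ((hmeas 1) (measurableSet_singleton _)).inter hBs1meas
  have hPB : P B = ENNReal.ofReal p * ENNReal.ofReal p
      + (ENNReal.ofReal p * (ENNReal.ofReal q * P (ladderB ξ L U (U - 2) m))
        + ENNReal.ofReal q * P (ladderB ξ L U (U - 3) (m + 1))) := by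
    rw [hBsets, measure_union hd2 hmeasU, measure_union hd1 hmeasB1]
    rw [meas_11 P p ξ hprob hindep,
      meas_interA3_B P p q hp0 hq ξ hmeas hval hprob hindep L U (U - 2) m,
      meas_interA1_B P p q hp0 hq ξ hmeas hval hprob hindep L U (U - 3) (m + 1)]
  rw [hPB]
  have hq0 : 0 ≤ q := by rw [hq]; linarith
  have hfin1 : P (ladderB ξ L U (U - 2) m) ≠ ⊤ := measure_ne_top P _
  have hfin2 : P (ladderB ξ L U (U - 3) (m + 1)) ≠ ⊤ := measure_ne_top P _
  rw [ENNReal.toReal_add, ENNReal.toReal_add, ENNReal.toReal_mul, ENNReal.toReal_mul,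
    ENNReal.toReal_mul, ENNReal.toReal_mul, ENNReal.toReal_ofReal hp0.le,
    ENNReal.toReal_ofReal hq0]
  · ring
  · exact ENNReal.mul_ne_top ENNReal.ofReal_ne_top
      (ENNReal.mul_ne_top ENNReal.ofReal_ne_top hfin1)
  · exact ENNReal.mul_ne_top ENNReal.ofReal_ne_top hfin2
  · exact ENNReal.mul_ne_top ENNReal.ofReal_ne_top ENNReal.ofReal_ne_top
  · exact ENNReal.add_ne_top.2 ⟨ENNReal.mul_ne_top ENNReal.ofReal_ne_top
      (ENNReal.mul_ne_top ENNReal.ofReal_ne_top hfin1),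
      ENNReal.mul_ne_top ENNReal.ofReal_ne_top hfin2⟩

end
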